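/- Let p₀ ∈ [2,∞), ℓ_μ ∈ (0,∞), ℓ_σ ∈ [0, ℓ_μ/2] and assume μ, σ : ℝ → ℝ satisfy conditions (A2)(ii) and (A3). Then there exists c ∈ (0,∞) such that for all n ∈ ℕ with n ≥ 1 and all u, v, w ∈ ℝ, ||u+v|^{p₀−2} − |u|^{p₀−2}|·|μ_n(u)·σ_n(u)|·|w| ≤ c·( |v|^{p₀}·(1 + (n^{3/4}·|w|)^{p₀}) + 1 + |w|^{p₀/2} + |u|^{p₀} ). -/

import Mathlib

/-- For `ξ₁ < … < ξ_k` and `i ∈ {0,…,k}`, `piece k ξ i` is the open interval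
`(ξ_i, ξ_{i+1})` of the partition of `ℝ`, with the conventions `ξ₀ = -∞`, `ξ_{k+1} = ∞`. -/
def piece (k : ℕ) (ξ : Fin k → ℝ) (i : Fin (k + 1)) : Set ℝ :=
  {x : ℝ | (∀ j : Fin k, (j : ℕ) < (i : ℕ) → ξ j < x) ∧
    ∀ j : Fin k, (i : ℕ) ≤ (j : ℕ) → x < ξ j}

/-- The tamed coefficient `f_n(x) = f(x) / (1 + n^{-1/2} |x|^ℓ)`. -/
noncomputable def tame (f : ℝ → ℝ) (ℓ : ℝ) (n : ℕ) (x : ℝ) : ℝ :=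
  f x / (1 + (1 / Real.sqrt (n : ℝ)) * |x| ^ ℓ)

-- Bernoulli corollaries
lemma B1 {a b q : ℝ} (hb : 0 < b) (hba : b ≤ a) (hq : 1 ≤ q) :
    a ^ q - b ^ q ≤ q * (a ^ (q - 1)) * (a - b) := by
  have ha : 0 < a := hb.trans_le hba
  have hs : (-1 : ℝ) ≤ b / a - 1 := by
    have : 0 ≤ b / a := by positivity
    linarith
  have hber := one_add_mul_self_le_rpow_one_add hs hq
  rw [add_sub_cancel] at hber
  have hdiv : (b / a) ^ q = b ^ q / a ^ q := Real.div_rpow hb.le ha.le q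
  rw [hdiv] at hber
  have haq : (0:ℝ) < a ^ q := Real.rpow_pos_of_pos ha q
  have hmul := mul_le_mul_of_nonneg_right hber haq.le
  have key : a ^ (q - 1) * a = a ^ q := by
    rw [← Real.rpow_add_one ha.ne' (q-1)]; ring_nf
  rw [div_mul_cancel₀ _ haq.ne'] at hmul
  have hsa : (b / a - 1) * a ^ q = (b - a) * a ^ (q - 1) := by
    field_simp
    rw [← key]; ring
  nlinarith [hmul, hsa]

lemma B2 {a b q : ℝ} (hb : 0 < b) (hba : b ≤ a) (hq0 : 0 ≤ q) (hq : q ≤ 1) :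
    a ^ q - b ^ q ≤ q * (b ^ (q - 1)) * (a - b) := by
  have ha : 0 < a := hb.trans_le hba
  have hs : (-1 : ℝ) ≤ a / b - 1 := by
    have : 0 ≤ a / b := by positivity
    linarith
  have hber := rpow_one_add_le_one_add_mul_self hs hq0 hq
  rw [add_sub_cancel] at hber
  have hdiv : (a / b) ^ q = a ^ q / b ^ q := Real.div_rpow ha.le hb.le q
  rw [hdiv] at hber
  have hbq : (0:ℝ) < b ^ q := Real.rpow_pos_of_pos hb q
  have hmul := mul_le_mul_of_nonneg_right hber hbq.le
  have key : b ^ (q - 1) * b = b ^ q := by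
    rw [← Real.rpow_add_one hb.ne' (q-1)]; ring_nf
  rw [div_mul_cancel₀ _ hbq.ne'] at hmul
  have hsa : (a / b - 1) * b ^ q = (a - b) * b ^ (q - 1) := by
    field_simp
    rw [← key]; ring
  nlinarith [hmul, hsa]

lemma rpow_diff_le {a b q : ℝ} (hb : 0 < b) (hba : b ≤ a) (hq : 0 ≤ q) :
    a ^ q - b ^ q ≤ q * (a - b) * (a ^ (q - 1) + b ^ (q - 1)) := by
  have ha : 0 < a := hb.trans_le hba
  have h1 : (0:ℝ) ≤ a ^ (q-1) := (Real.rpow_pos_of_pos ha _).le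
  have h2 : (0:ℝ) ≤ b ^ (q-1) := (Real.rpow_pos_of_pos hb _).le
  have hab : 0 ≤ a - b := by linarith
  rcases le_total 1 q with h | h
  · have := B1 hb hba h
    nlinarith [mul_nonneg (mul_nonneg (by linarith : (0:ℝ) ≤ q) hab) h2]
  · have := B2 hb hba hq h
    nlinarith [mul_nonneg (mul_nonneg hq hab) h1]

example (m : ℕ) (f : Fin m → ℝ) : ∃ M, ∀ i, f i ≤ M := Finite.exists_le f

lemma rpow_le_one_add_rpow {a e r : ℝ} (ha : 0 ≤ a) (he : 0 ≤ e) (her : e ≤ r) :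
    a ^ e ≤ 1 + a ^ r := by
  rcases le_total a 1 with h | h
  · have := Real.rpow_le_one ha h he
    have : (0:ℝ) ≤ a ^ r := Real.rpow_nonneg ha r
    linarith [Real.rpow_le_one ha h he]
  · have := Real.rpow_le_rpow_of_exponent_le h her
    linarith

lemma one_add_rpow_mul {x ℓ : ℝ} (hℓ : 0 ≤ ℓ) :
    (1 + |x| ^ ℓ) * (1 + |x|) ≤ 3 * (1 + |x| ^ (ℓ + 1)) := by
  have hx : (0:ℝ) ≤ |x| := abs_nonneg x
  have h1 : |x| ^ (ℓ + 1) = |x| ^ ℓ * |x| := by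
    rw [Real.rpow_add' hx (by positivity : (0:ℝ) < ℓ + 1).ne', Real.rpow_one]
  have h2 : |x| ≤ 1 + |x| ^ (ℓ + 1) := by
    simpa using rpow_le_one_add_rpow hx (by norm_num) (by linarith : (1:ℝ) ≤ ℓ + 1)
  have h3 : |x| ^ ℓ ≤ 1 + |x| ^ (ℓ + 1) := rpow_le_one_add_rpow hx hℓ (by linarith)
  nlinarith [Real.rpow_nonneg hx ℓ, Real.rpow_nonneg hx (ℓ+1)]


lemma piece_cover (k : ℕ) (ξ : Fin k → ℝ) (hξ : StrictMono ξ) (x : ℝ) :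
    (∃ j, x = ξ j) ∨ ∃ i : Fin (k+1), x ∈ piece k ξ i := by
  by_cases hex : ∃ j, x = ξ j
  · exact Or.inl hex
  push_neg at hex
  right
  set F := Finset.univ.filter (fun j : Fin k => ξ j < x) with hF
  have hik : F.card ≤ k := by
    simpa using Finset.card_filter_le Finset.univ (fun j : Fin k => ξ j < x)
  refine ⟨⟨F.card, Nat.lt_succ_of_le hik⟩, ?_, ?_⟩
  · intro j hj
    by_contra hnot
    push_neg at hnot
    have hxj : x < ξ j := lt_of_le_of_ne hnot (hex j)
    have hsub : F ⊆ Finset.Iio j := by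
      intro j' hj'
      rw [hF, Finset.mem_filter] at hj'
      have : ξ j' < ξ j := hj'.2.trans hxj
      exact Finset.mem_Iio.mpr (hξ.lt_iff_lt.mp this)
    have := Finset.card_le_card hsub
    rw [Fin.card_Iio] at this
    simp only [Fin.val_fin_lt] at hj
    omega
  · intro j hj
    by_contra hnot
    push_neg at hnot
    have hxj : ξ j < x := lt_of_le_of_ne hnot (fun h => hex j h.symm)
    have hsub : Finset.Iic j ⊆ F := by
      intro j' hj'
      rw [hF, Finset.mem_filter]
      refine ⟨Finset.mem_univ _, ?_⟩
      have : ξ j' ≤ ξ j := hξ.monotone (Finset.mem_Iic.mp hj')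
      exact this.trans_lt hxj
    have hcard := Finset.card_le_card hsub
    rw [Fin.card_Iic] at hcard
    have hj2 : F.card ≤ (j:ℕ) := hj
    omega

lemma piece_nonempty (k : ℕ) (ξ : Fin k → ℝ) (hξ : StrictMono ξ) (i : Fin (k+1)) :
    ∃ a, a ∈ piece k ξ i := by
  rcases Nat.eq_zero_or_pos (i : ℕ) with hi0 | hipos
  · rcases Nat.eq_zero_or_pos k with hk0 | hkpos
    · refine ⟨0, ?_, ?_⟩ <;> intro j <;> exact absurd j.2 (by omega)
    · refine ⟨ξ ⟨0, hkpos⟩ - 1, ?_, ?_⟩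
      · intro j hj; omega
      · intro j _
        have : ξ ⟨0, hkpos⟩ ≤ ξ j := hξ.monotone (by simp [Fin.le_def])
        linarith
  · -- 0 < i; let m := i - 1 < k since i ≤ k... i : Fin (k+1), i ≤ k
    have him : (i : ℕ) - 1 < k := by omega
    rcases Nat.lt_or_ge (i : ℕ) (k) with hik | hik
    ·
      refine ⟨(ξ ⟨(i:ℕ) - 1, him⟩ + ξ ⟨(i:ℕ), hik⟩) / 2, ?_, ?_⟩
      · intro j hj
        have h1 : ξ j ≤ ξ ⟨(i:ℕ) - 1, him⟩ := hξ.monotone (by simp [Fin.le_def]; omega)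
        have h2 : ξ ⟨(i:ℕ) - 1, him⟩ < ξ ⟨(i:ℕ), hik⟩ := hξ (Fin.mk_lt_mk.mpr (by omega))
        linarith
      · intro j hj
        have h1 : ξ ⟨(i:ℕ), hik⟩ ≤ ξ j := hξ.monotone (by simp [Fin.le_def]; omega)
        have h2 : ξ ⟨(i:ℕ) - 1, him⟩ < ξ ⟨(i:ℕ), hik⟩ := hξ (Fin.mk_lt_mk.mpr (by omega))
        linarith
    · -- i = k (i ≤ k from Fin (k+1))
      refine ⟨ξ ⟨(i:ℕ) - 1, him⟩ + 1, ?_, ?_⟩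
      · intro j hj
        have h1 : ξ j ≤ ξ ⟨(i:ℕ) - 1, him⟩ := hξ.monotone (by simp [Fin.le_def]; omega)
        linarith
      · intro j hj
        have := j.2; omega

lemma mu_growth (ℓμ : ℝ) (hℓμ : 0 < ℓμ) (μ : ℝ → ℝ) (c₂ : ℝ) (hc₂ : 0 < c₂)
    (k : ℕ) (ξ : Fin k → ℝ) (hξ : StrictMono ξ)
    (hA2ii : ∀ i : Fin (k + 1), ∀ x ∈ piece k ξ i, ∀ y ∈ piece k ξ i,
      |μ x - μ y| ≤ c₂ * (1 + |x| ^ ℓμ + |y| ^ ℓμ) * |x - y|) :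
    ∃ A : ℝ, 1 ≤ A ∧ ∀ x : ℝ, |μ x| ≤ A * (1 + |x| ^ (ℓμ + 1)) := by
  choose a ha using piece_nonempty k ξ hξ
  obtain ⟨M₁, hM₁⟩ := Finite.exists_le (fun i : Fin (k+1) => max (|μ (a i)|) (|a i|))
  obtain ⟨M₂, hM₂⟩ := Finite.exists_le (fun j : Fin k => |μ (ξ j)|)
  set M : ℝ := max 1 (max M₁ M₂) with hM
  have hM1 : (1:ℝ) ≤ M := le_max_left _ _
  have hM0 : (0:ℝ) ≤ M := by linarith
  have hMrpow : (0:ℝ) ≤ M ^ ℓμ := Real.rpow_nonneg hM0 _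
  have hpos : (0:ℝ) ≤ 3 * c₂ * (1 + M ^ ℓμ) * (1 + M) := by positivity
  refine ⟨M + 3 * c₂ * (1 + M ^ ℓμ) * (1 + M), by linarith, fun x => ?_⟩
  have hxr : (0:ℝ) ≤ |x| ^ (ℓμ + 1) := Real.rpow_nonneg (abs_nonneg x) _
  rcases piece_cover k ξ hξ x with ⟨j, rfl⟩ | ⟨i, hx⟩
  · have : |μ (ξ j)| ≤ M₂ := hM₂ j
    have hM2M : M₂ ≤ M := le_trans (le_max_right M₁ M₂) (le_max_right _ _)
    nlinarith [mul_nonneg hpos hxr, mul_nonneg hM0 hxr]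
  · have hai : |μ (a i)| ≤ M := le_trans (le_trans (le_max_left _ _) (hM₁ i))
      (le_trans (le_max_left M₁ M₂) (le_max_right _ _))
    have hai2 : |a i| ≤ M := le_trans (le_trans (le_max_right _ _) (hM₁ i))
      (le_trans (le_max_left M₁ M₂) (le_max_right _ _))
    have e1 : |μ x - μ (a i)| ≤ c₂ * (1 + |x| ^ ℓμ + |a i| ^ ℓμ) * |x - a i| :=
      hA2ii i x hx (a i) (ha i)
    have hxℓ : (0:ℝ) ≤ |x| ^ ℓμ := Real.rpow_nonneg (abs_nonneg x) _
    have haiℓ : |a i| ^ ℓμ ≤ M ^ ℓμ := Real.rpow_le_rpow (abs_nonneg _) hai2 hℓμ.le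
    have e2 : (1 + |x| ^ ℓμ + |a i| ^ ℓμ) ≤ (1 + M ^ ℓμ) * (1 + |x| ^ ℓμ) := by nlinarith
    have e3 : |x - a i| ≤ (1 + M) * (1 + |x|) := by
      have := abs_sub_abs_le_abs_sub x (a i)
      have h := abs_sub x (a i)
      have h2 : |x - a i| ≤ |x| + |a i| := abs_sub x (a i)
      nlinarith [abs_nonneg x]
    have e4 : c₂ * (1 + |x| ^ ℓμ + |a i| ^ ℓμ) * |x - a i|
        ≤ c₂ * ((1 + M ^ ℓμ) * (1 + |x| ^ ℓμ)) * ((1 + M) * (1 + |x|)) := by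
      have h1 : (0:ℝ) ≤ 1 + |x| ^ ℓμ + |a i| ^ ℓμ := by positivity
      gcongr
    have e5 : (1 + |x| ^ ℓμ) * (1 + |x|) ≤ 3 * (1 + |x| ^ (ℓμ + 1)) := one_add_rpow_mul hℓμ.le
    have e6 : c₂ * ((1 + M ^ ℓμ) * (1 + |x| ^ ℓμ)) * ((1 + M) * (1 + |x|))
        = (c₂ * (1 + M ^ ℓμ) * (1 + M)) * ((1 + |x| ^ ℓμ) * (1 + |x|)) := by ring
    have e7 : (c₂ * (1 + M ^ ℓμ) * (1 + M)) * ((1 + |x| ^ ℓμ) * (1 + |x|))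
        ≤ (c₂ * (1 + M ^ ℓμ) * (1 + M)) * (3 * (1 + |x| ^ (ℓμ + 1))) := by
      apply mul_le_mul_of_nonneg_left e5 (by positivity)
    have e8 : |μ x| ≤ |μ (a i)| + |μ x - μ (a i)| := by
      have := abs_sub_abs_le_abs_sub (μ x) (μ (a i)); linarith [abs_nonneg (μ x - μ (a i))]
    nlinarith [mul_nonneg hM0 hxr]

lemma sigma_growth (ℓσ : ℝ) (hℓσ0 : 0 ≤ ℓσ) (σ : ℝ → ℝ) (c₃ : ℝ) (hc₃ : 0 < c₃)
    (hA3 : ∀ x y : ℝ, |σ x - σ y| ≤ c₃ * (1 + |x| ^ ℓσ + |y| ^ ℓσ) * |x - y|) :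
    ∃ B : ℝ, 1 ≤ B ∧ ∀ x : ℝ, |σ x| ≤ B * (1 + |x| ^ (ℓσ + 1)) := by
  refine ⟨|σ 0| + 6 * c₃ + 1, by linarith [abs_nonneg (σ 0)], fun x => ?_⟩
  have h0 := hA3 x 0
  simp only [abs_zero, sub_zero] at h0
  have h0r : (0:ℝ) ^ ℓσ ≤ 1 := Real.zero_rpow_le_one ℓσ
  have h0r' : (0:ℝ) ≤ (0:ℝ) ^ ℓσ := Real.rpow_nonneg le_rfl _
  have hxℓ : (0:ℝ) ≤ |x| ^ ℓσ := Real.rpow_nonneg (abs_nonneg x) _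
  have hx : (0:ℝ) ≤ |x| := abs_nonneg x
  have e1 : |σ x| ≤ |σ 0| + c₃ * (2 + |x| ^ ℓσ) * |x| := by
    have := abs_sub_abs_le_abs_sub (σ x) (σ 0)
    nlinarith [abs_nonneg (σ x - σ 0), mul_nonneg hc₃.le hx]
  have e2 : (2 + |x| ^ ℓσ) * |x| ≤ 2 * ((1 + |x| ^ ℓσ) * (1 + |x|)) := by nlinarith
  have e3 : (1 + |x| ^ ℓσ) * (1 + |x|) ≤ 3 * (1 + |x| ^ (ℓσ + 1)) := one_add_rpow_mul hℓσ0
  have hxr : (0:ℝ) ≤ |x| ^ (ℓσ + 1) := Real.rpow_nonneg hx _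
  nlinarith [abs_nonneg (σ 0), mul_nonneg hc₃.le hxr]


section taming
variable {ℓμ ℓσ : ℝ} {n : ℕ} (hn : 1 ≤ n) {u : ℝ}

lemma sqrt_one_le {n : ℕ} (hn : 1 ≤ n) : 1 ≤ Real.sqrt (n : ℝ) := by
  rw [show (1:ℝ) = Real.sqrt 1 by simp]
  exact Real.sqrt_le_sqrt (by exact_mod_cast hn)

lemma denom_pos {n : ℕ} (hn : 1 ≤ n) (ℓ : ℝ) (u : ℝ) :
    1 ≤ 1 + (1 / Real.sqrt (n : ℝ)) * |u| ^ ℓ := by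
  have h1 := sqrt_one_le hn
  have : (0:ℝ) ≤ (1 / Real.sqrt (n : ℝ)) * |u| ^ ℓ := by positivity
  linarith

lemma abs_tame_eq (f : ℝ → ℝ) (ℓ : ℝ) {n : ℕ} (hn : 1 ≤ n) (u : ℝ) :
    |tame f ℓ n u| = |f u| / (1 + (1 / Real.sqrt (n : ℝ)) * |u| ^ ℓ) := by
  rw [tame, abs_div]
  congr 1
  exact abs_of_pos (by linarith [denom_pos hn ℓ u])

lemma tame_mu_le {A : ℝ} (hA0 : 0 ≤ A) {μ : ℝ → ℝ}
    (hA : ∀ x, |μ x| ≤ A * (1 + |x| ^ (ℓμ + 1))) (hℓμ : 0 < ℓμ) {n : ℕ} (hn : 1 ≤ n) (u : ℝ) :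
    |tame μ ℓμ n u| ≤ A * Real.sqrt (n : ℝ) * (1 + |u|) := by
  set s := Real.sqrt (n : ℝ) with hs
  have hs1 : 1 ≤ s := sqrt_one_le hn
  have hs0 : 0 < s := by linarith
  set d := 1 + (1 / s) * |u| ^ ℓμ with hd
  have hd1 : 1 ≤ d := denom_pos hn ℓμ u
  have hd0 : 0 < d := by linarith
  rw [abs_tame_eq μ ℓμ hn u, div_le_iff₀ hd0]
  have key : |μ u| ≤ A * (1 + |u| ^ (ℓμ + 1)) := hA u
  have hsplit : |u| ^ (ℓμ + 1) = |u| ^ ℓμ * |u| := by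
    rw [Real.rpow_add' (abs_nonneg u) (by positivity : (0:ℝ) < ℓμ + 1).ne', Real.rpow_one]
  have hrn : (0:ℝ) ≤ |u| ^ ℓμ := Real.rpow_nonneg (abs_nonneg u) _
  have hsd : 1 + |u| ^ ℓμ ≤ s * d := by
    have : s * d = s + |u| ^ ℓμ := by
      rw [hd]; field_simp
    rw [this]; linarith
  have e1 : 1 + |u| ^ (ℓμ + 1) ≤ (1 + |u|) * (1 + |u| ^ ℓμ) := by
    rw [hsplit]; nlinarith [abs_nonneg u]
  have e2 : (1 + |u|) * (1 + |u| ^ ℓμ) ≤ (1 + |u|) * (s * d) := by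
    apply mul_le_mul_of_nonneg_left hsd (by positivity)
  calc |μ u| ≤ A * (1 + |u| ^ (ℓμ + 1)) := key
    _ ≤ A * ((1 + |u|) * (s * d)) := by
        apply mul_le_mul_of_nonneg_left (e1.trans e2) hA0
    _ = A * s * (1 + |u|) * d := by ring

lemma tame_sigma_le {B : ℝ} (hB0 : 0 ≤ B) {σ : ℝ → ℝ}
    (hB : ∀ x, |σ x| ≤ B * (1 + |x| ^ (ℓσ + 1))) (hℓμ : 0 < ℓμ) (hℓσ0 : 0 ≤ ℓσ)
    (hℓσ : ℓσ ≤ ℓμ / 2) {n : ℕ} (hn : 1 ≤ n) (u : ℝ) :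
    |tame σ ℓμ n u| ≤ 3 * B * (n : ℝ) ^ ((1:ℝ)/4) * (1 + |u|) := by
  set s := Real.sqrt (n : ℝ) with hs
  have hs1 : 1 ≤ s := sqrt_one_le hn
  have hs0 : 0 < s := by linarith
  set r := (n : ℝ) ^ ((1:ℝ)/4) with hr
  have hn1 : (1:ℝ) ≤ (n:ℝ) := by exact_mod_cast hn
  have hr1 : 1 ≤ r := Real.one_le_rpow hn1 (by norm_num)
  have hr0 : 0 < r := by linarith
  have hrr : r * r = s := by
    rw [hr, hs, ← Real.rpow_add (by linarith : (0:ℝ) < (n:ℝ)), Real.sqrt_eq_rpow]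
    norm_num
  set d := 1 + (1 / s) * |u| ^ ℓμ with hd
  have hd1 : 1 ≤ d := denom_pos hn ℓμ u
  have hd0 : 0 < d := by linarith
  rw [abs_tame_eq σ ℓμ hn u, div_le_iff₀ hd0]
  have hrn : (0:ℝ) ≤ |u| ^ ℓμ := Real.rpow_nonneg (abs_nonneg u) _
  have hrh : (0:ℝ) ≤ |u| ^ (ℓμ/2) := Real.rpow_nonneg (abs_nonneg u) _
  -- |u|^ℓσ ≤ 1 + |u|^(ℓμ/2)
  have e0 : |u| ^ ℓσ ≤ 1 + |u| ^ (ℓμ / 2) := rpow_le_one_add_rpow (abs_nonneg u) hℓσ0 hℓσ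
  -- key: |u|^(ℓμ/2) ≤ r + (1/r) * |u|^ℓμ  (AM-GM)
  have hhalf : |u| ^ (ℓμ/2) * |u| ^ (ℓμ/2) = |u| ^ ℓμ := by
    rw [← Real.rpow_add' (abs_nonneg u) (by positivity : (0:ℝ) < ℓμ/2 + ℓμ/2).ne']
    ring_nf
  have amgm : |u| ^ (ℓμ/2) ≤ r + (1/r) * |u| ^ ℓμ := by
    rcases le_total (|u| ^ (ℓμ/2)) r with h | h
    · have : (0:ℝ) ≤ (1/r) * |u| ^ ℓμ := by positivity
      linarith
    · have : |u| ^ ℓμ / r ≥ |u| ^ (ℓμ/2) := by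
        rw [ge_iff_le, le_div_iff₀ hr0]
        nlinarith
      have h2 : (1/r) * |u| ^ ℓμ = |u| ^ ℓμ / r := by ring
      linarith
  -- so 2 + |u|^(ℓμ/2) ≤ 2 r d
  have e1 : 2 + |u| ^ (ℓμ/2) ≤ 3 * r * d := by
    have hrd : 3 * r * d = 3 * r + 3 * (r / s) * |u| ^ ℓμ := by
      rw [hd]; field_simp
    have hscomp : r / s = 1 / r := by
      rw [← hrr]; field_simp
    rw [hrd, hscomp]
    nlinarith [mul_nonneg (by positivity : (0:ℝ) ≤ 1/r) hrn]
  have key : |σ u| ≤ B * (1 + |u| ^ (ℓσ + 1)) := hB u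
  have hsplit : |u| ^ (ℓσ + 1) = |u| ^ ℓσ * |u| := by
    rw [Real.rpow_add' (abs_nonneg u) (by positivity : (0:ℝ) < ℓσ + 1).ne', Real.rpow_one]
  have hrσ : (0:ℝ) ≤ |u| ^ ℓσ := Real.rpow_nonneg (abs_nonneg u) _
  have e2 : 1 + |u| ^ (ℓσ + 1) ≤ (1 + |u|) * (1 + |u| ^ ℓσ) := by
    rw [hsplit]; nlinarith [abs_nonneg u]
  have e3 : 1 + |u| ^ ℓσ ≤ 2 + |u| ^ (ℓμ/2) := by linarith
  have e4 : (1 + |u|) * (1 + |u| ^ ℓσ) ≤ (1 + |u|) * (3 * r * d) := by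
    apply mul_le_mul_of_nonneg_left (e3.trans e1) (by positivity)
  calc |σ u| ≤ B * (1 + |u| ^ (ℓσ + 1)) := key
    _ ≤ B * ((1 + |u|) * (3 * r * d)) := by
        apply mul_le_mul_of_nonneg_left (e2.trans e4) hB0
    _ = 3 * B * r * (1 + |u|) * d := by ring

end taming

lemma le_one_add_rpow {x p : ℝ} (hx : 0 ≤ x) (hp : 1 ≤ p) : x ≤ 1 + x ^ p := by
  have := rpow_le_one_add_rpow hx (by norm_num : (0:ℝ) ≤ 1) hp
  rwa [Real.rpow_one] at this

lemma young_r {x y r : ℝ} (hx : 0 ≤ x) (hy : 0 ≤ y) (hr : 0 ≤ r) :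
    x ^ r * y ≤ x ^ (r + 1) + y ^ (r + 1) := by
  have hsx : x ^ (r+1) = x ^ r * x := by
    rw [Real.rpow_add' hx (by positivity : (0:ℝ) < r + 1).ne', Real.rpow_one]
  have hsy : y ^ (r+1) = y ^ r * y := by
    rw [Real.rpow_add' hy (by positivity : (0:ℝ) < r + 1).ne', Real.rpow_one]
  rcases le_total y x with h | h
  · have : x ^ r * y ≤ x ^ r * x :=
      mul_le_mul_of_nonneg_left h (Real.rpow_nonneg hx r)
    rw [hsx]
    nlinarith [Real.rpow_nonneg hy (r+1)]
  · have h1 : x ^ r ≤ y ^ r := Real.rpow_le_rpow hx h hr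
    have : x ^ r * y ≤ y ^ r * y := mul_le_mul_of_nonneg_right h1 hy
    rw [← hsy] at this
    nlinarith [Real.rpow_nonneg hx (r+1)]

lemma abs_rpow_sub_rpow_le {x y q : ℝ} (hx : 0 < x) (hy : 0 < y) (hq : 0 ≤ q) :
    |x ^ q - y ^ q| ≤ q * |x - y| * (x ^ (q-1) + y ^ (q-1)) := by
  rcases le_total y x with h | h
  · have h1 : y ^ q ≤ x ^ q := Real.rpow_le_rpow hy.le h hq
    rw [abs_of_nonneg (by linarith), abs_of_nonneg (by linarith)]
    have := rpow_diff_le hy h hq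
    linarith
  · have h1 : x ^ q ≤ y ^ q := Real.rpow_le_rpow hx.le h hq
    rw [abs_sub_comm, abs_sub_comm x y, abs_of_nonneg (by linarith), abs_of_nonneg (by linarith)]
    have := rpow_diff_le hx h hq
    linarith

lemma max_one_rpow_le {v p : ℝ} (hp : 0 ≤ p) : (max 1 |v|) ^ p ≤ 1 + |v| ^ p := by
  rcases max_cases 1 |v| with ⟨h1, _⟩ | ⟨h1, _⟩ <;> rw [h1]
  · simp [Real.one_rpow]
    positivity
  · linarith [Real.rpow_nonneg (abs_nonneg v) p]

set_option maxHeartbeats 2000000 in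
/-- If `μ, σ` satisfy (A2)(ii) and (A3) with `p₀ ∈ [2,∞)`, `ℓμ ∈ (0,∞)`
and `ℓσ ∈ [0, ℓμ/2]`, then there is `c ∈ (0,∞)` such that for all `n ≥ 1` and all
`u, v, w ∈ ℝ`,
`||u+v|^{p₀-2} - |u|^{p₀-2}|·|μ_n(u)·σ_n(u)|·|w|
  ≤ c·(|v|^{p₀}·(1 + (n^{3/4}|w|)^{p₀}) + 1 + |w|^{p₀/2} + |u|^{p₀})`. -/
theorem stmt_19 (p₀ ℓμ ℓσ : ℝ) (hp₀ : 2 ≤ p₀) (hℓμ : 0 < ℓμ) (hℓσ0 : 0 ≤ ℓσ)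
    (hℓσ : ℓσ ≤ ℓμ / 2)
    (μ σ : ℝ → ℝ)
    (c₂ : ℝ) (hc₂ : 0 < c₂) (k : ℕ) (ξ : Fin k → ℝ) (hξ : StrictMono ξ)
    (hA2ii : ∀ i : Fin (k + 1), ∀ x ∈ piece k ξ i, ∀ y ∈ piece k ξ i,
      |μ x - μ y| ≤ c₂ * (1 + |x| ^ ℓμ + |y| ^ ℓμ) * |x - y|)
    (c₃ : ℝ) (hc₃ : 0 < c₃)
    (hA3 : ∀ x y : ℝ, |σ x - σ y| ≤ c₃ * (1 + |x| ^ ℓσ + |y| ^ ℓσ) * |x - y|) :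
    ∃ c : ℝ, 0 < c ∧ ∀ n : ℕ, 1 ≤ n → ∀ u v w : ℝ,
      abs (|u + v| ^ (p₀ - 2) - |u| ^ (p₀ - 2)) * |tame μ ℓμ n u * tame σ ℓμ n u| * |w| ≤
        c * (|v| ^ p₀ * (1 + ((n : ℝ) ^ ((3 : ℝ) / 4) * |w|) ^ p₀) + 1 + |w| ^ (p₀ / 2)
          + |u| ^ p₀) := by
  obtain ⟨A, hA1, hA⟩ := mu_growth ℓμ hℓμ μ c₂ hc₂ k ξ hξ hA2ii
  obtain ⟨B, hB1, hB⟩ := sigma_growth ℓσ hℓσ0 σ c₃ hc₃ hA3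
  have hA0 : (0:ℝ) ≤ A := by linarith
  have hB0 : (0:ℝ) ≤ B := by linarith
  set q : ℝ := p₀ - 2 with hqdef
  have hq0 : 0 ≤ q := by rw [hqdef]; linarith
  have hp1 : (1:ℝ) ≤ p₀ := by linarith
  have hqp : q ≤ p₀ := by rw [hqdef]; linarith
  have hqp2 : q + 1 + 1 = p₀ := by rw [hqdef]; ring
  clear_value q
  have h2p : (0:ℝ) < (2:ℝ) ^ p₀ := Real.rpow_pos_of_pos (by norm_num) _
  have h5p : (0:ℝ) < (5:ℝ) ^ p₀ := Real.rpow_pos_of_pos (by norm_num) _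
  have h2q : (0:ℝ) < (2:ℝ) ^ q := Real.rpow_pos_of_pos (by norm_num) _
  set C₁ : ℝ := 8 * A * B * (2:ℝ) ^ p₀ with hC₁
  set C₂ : ℝ := 6 * A * B * (5:ℝ) ^ p₀ with hC₂
  set C₃ : ℝ := 48 * (q + 1) * (2:ℝ) ^ q * A * B with hC₃
  have hC₁0 : 0 < C₁ := by
    rw [hC₁]; have h2 : (0:ℝ) < A := by linarith
    have h3 : (0:ℝ) < B := by linarith
    positivity
  have hC₂0 : 0 < C₂ := by
    rw [hC₂]; have h2 : (0:ℝ) < A := by linarith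
    have h3 : (0:ℝ) < B := by linarith
    positivity
  have hC₃0 : 0 < C₃ := by
    rw [hC₃]
    have h1 : (0:ℝ) < q + 1 := by linarith
    have h2 : (0:ℝ) < A := by linarith
    have h3 : (0:ℝ) < B := by linarith
    positivity
  clear_value C₁ C₂ C₃
  refine ⟨C₁ + C₂ + C₃, by linarith, fun n hn u v w => ?_⟩
  set N : ℝ := (n:ℝ) ^ ((3:ℝ)/4) with hNdef
  have hn1 : (1:ℝ) ≤ (n:ℝ) := by exact_mod_cast hn
  have hN1 : 1 ≤ N := Real.one_le_rpow hn1 (by norm_num)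
  have hN0 : 0 ≤ N := by linarith
  have hAB : (0:ℝ) ≤ A * B := mul_nonneg hA0 hB0
  have hABN : (0:ℝ) ≤ A * B * N := mul_nonneg hAB hN0
  -- product taming bound (before clearing N's value)
  have hprod : |tame μ ℓμ n u * tame σ ℓμ n u| ≤
      3 * A * B * N * ((1 + |u|) * (1 + |u|)) := by
    rw [abs_mul]
    have h1 := tame_mu_le hA0 hA hℓμ hn u
    have h2 := tame_sigma_le hB0 hB hℓμ hℓσ0 hℓσ hn u
    have hmm : |tame μ ℓμ n u| * |tame σ ℓμ n u| ≤
        (A * Real.sqrt (n:ℝ) * (1 + |u|)) * (3 * B * (n:ℝ) ^ ((1:ℝ)/4) * (1 + |u|)) :=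
      mul_le_mul h1 h2 (abs_nonneg _)
        (mul_nonneg (mul_nonneg hA0 (Real.sqrt_nonneg _)) (by positivity))
    have hsq : Real.sqrt (n:ℝ) * (n:ℝ) ^ ((1:ℝ)/4) = N := by
      rw [Real.sqrt_eq_rpow, hNdef, ← Real.rpow_add (by linarith : (0:ℝ) < (n:ℝ))]
      norm_num
    calc |tame μ ℓμ n u| * |tame σ ℓμ n u|
        ≤ (A * Real.sqrt (n:ℝ) * (1 + |u|)) * (3 * B * (n:ℝ) ^ ((1:ℝ)/4) * (1 + |u|)) := hmm
      _ = 3 * A * B * (Real.sqrt (n:ℝ) * (n:ℝ) ^ ((1:ℝ)/4)) * ((1 + |u|) * (1 + |u|)) := by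
          ring
      _ = 3 * A * B * N * ((1 + |u|) * (1 + |u|)) := by rw [hsq]
  clear_value N
  set t : ℝ := N * |w| with htdef
  have htw : |w| ≤ t := by
    rw [htdef]
    have := mul_le_mul_of_nonneg_right hN1 (abs_nonneg w)
    linarith
  have ht0 : 0 ≤ t := by rw [htdef]; positivity
  clear_value t
  have hvp : (0:ℝ) ≤ |v| ^ p₀ := Real.rpow_nonneg (abs_nonneg v) _
  have hup : (0:ℝ) ≤ |u| ^ p₀ := Real.rpow_nonneg (abs_nonneg u) _
  have htp : (0:ℝ) ≤ t ^ p₀ := Real.rpow_nonneg ht0 _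
  have hwp : (0:ℝ) ≤ |w| ^ (p₀/2) := Real.rpow_nonneg (abs_nonneg w) _
  set R : ℝ := |v| ^ p₀ * (1 + t ^ p₀) + 1 + |w| ^ (p₀ / 2) + |u| ^ p₀ with hRdef
  have hR0 : 0 ≤ R := by rw [hRdef]; positivity
  have hvR : |v| ^ p₀ * (1 + t ^ p₀) ≤ R := by rw [hRdef]; linarith
  clear_value R
  have htle : t ≤ 1 + t ^ p₀ := le_one_add_rpow ht0 hp1
  have habs : (0:ℝ) ≤ |tame μ ℓμ n u * tame σ ℓμ n u| := abs_nonneg _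
  have hXq : (0:ℝ) ≤ |u + v| ^ q := Real.rpow_nonneg (abs_nonneg _) _
  have hYq : (0:ℝ) ≤ |u| ^ q := Real.rpow_nonneg (abs_nonneg _) _
  have hCsum : C₁ ≤ C₁ + C₂ + C₃ := by linarith
  have hCsum2 : C₂ ≤ C₁ + C₂ + C₃ := by linarith
  have hCsum3 : C₃ ≤ C₁ + C₂ + C₃ := by linarith
  rcases le_total (|u|) 1 with hu1 | hu1
  · -- Case 1 : |u| ≤ 1
    have hP : |tame μ ℓμ n u * tame σ ℓμ n u| ≤ 4 * A * B := by
      rw [abs_mul]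
      have d1 : |tame μ ℓμ n u| ≤ |μ u| := by
        rw [abs_tame_eq μ ℓμ hn u]
        exact div_le_self (abs_nonneg _) (denom_pos hn ℓμ u)
      have d2 : |tame σ ℓμ n u| ≤ |σ u| := by
        rw [abs_tame_eq σ ℓμ hn u]
        exact div_le_self (abs_nonneg _) (denom_pos hn ℓμ u)
      have g1 : |μ u| ≤ 2 * A := by
        have hle : |u| ^ (ℓμ + 1) ≤ 1 :=
          Real.rpow_le_one (abs_nonneg u) hu1 (by linarith)
        calc |μ u| ≤ A * (1 + |u| ^ (ℓμ + 1)) := hA u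
          _ ≤ A * 2 := mul_le_mul_of_nonneg_left (by linarith) hA0
          _ = 2 * A := by ring
      have g2 : |σ u| ≤ 2 * B := by
        have hle : |u| ^ (ℓσ + 1) ≤ 1 :=
          Real.rpow_le_one (abs_nonneg u) hu1 (by linarith)
        calc |σ u| ≤ B * (1 + |u| ^ (ℓσ + 1)) := hB u
          _ ≤ B * 2 := mul_le_mul_of_nonneg_left (by linarith) hB0
          _ = 2 * B := by ring
      calc |tame μ ℓμ n u| * |tame σ ℓμ n u| ≤ (2*A) * (2*B) := by
            apply mul_le_mul (d1.trans g1) (d2.trans g2) (abs_nonneg _) (by linarith)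
        _ = 4 * A * B := by ring
    have hD : abs (|u + v| ^ q - |u| ^ q) ≤ 2 * (2:ℝ) ^ p₀ * (1 + |v| ^ p₀) := by
      have e1 : abs (|u + v| ^ q - |u| ^ q) ≤ |u + v| ^ q + |u| ^ q := by
        have := abs_sub (|u + v| ^ q) (|u| ^ q)
        rwa [abs_of_nonneg hXq, abs_of_nonneg hYq] at this
      have e2 : |u| ^ q ≤ 1 := Real.rpow_le_one (abs_nonneg u) hu1 hq0
      have e3 : |u + v| ^ q ≤ (2 * max 1 |v|) ^ q := by
        apply Real.rpow_le_rpow (abs_nonneg _) _ hq0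
        calc |u + v| ≤ |u| + |v| := abs_add_le u v
          _ ≤ 1 + max 1 |v| := by
              have := le_max_right 1 |v|; linarith
          _ ≤ 2 * max 1 |v| := by
              have := le_max_left 1 |v|; linarith
      have e4 : ((2:ℝ) * max 1 |v|) ^ q ≤ (2 * max 1 |v|) ^ p₀ := by
        apply Real.rpow_le_rpow_of_exponent_le _ hqp
        have := le_max_left 1 |v|; linarith
      have e5 : ((2:ℝ) * max 1 |v|) ^ p₀ = (2:ℝ)^p₀ * (max 1 |v|) ^ p₀ :=
        Real.mul_rpow (by norm_num) (le_trans zero_le_one (le_max_left 1 |v|))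
      have e6 : (max 1 |v|) ^ p₀ ≤ 1 + |v| ^ p₀ := max_one_rpow_le (by linarith)
      have e7 : |u + v| ^ q ≤ (2:ℝ)^p₀ * (1 + |v| ^ p₀) :=
        (e3.trans (e4.trans_eq e5)).trans (mul_le_mul_of_nonneg_left e6 h2p.le)
      have h2p1 : (1:ℝ) ≤ (2:ℝ) ^ p₀ := Real.one_le_rpow (by norm_num) (by linarith)
      have e8 : (1:ℝ) ≤ (2:ℝ)^p₀ * (1 + |v| ^ p₀) := by
        have := mul_le_mul h2p1 (by linarith : (1:ℝ) ≤ 1 + |v| ^ p₀)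
          (by norm_num) h2p.le
        linarith
      calc abs (|u + v| ^ q - |u| ^ q) ≤ |u + v| ^ q + |u| ^ q := e1
        _ ≤ (2:ℝ)^p₀ * (1 + |v| ^ p₀) + 1 := by linarith
        _ ≤ 2 * (2:ℝ) ^ p₀ * (1 + |v| ^ p₀) := by linarith
    have step : abs (|u + v| ^ q - |u| ^ q) * |tame μ ℓμ n u * tame σ ℓμ n u| * |w| ≤
        (2 * (2:ℝ) ^ p₀ * (1 + |v| ^ p₀)) * (4 * A * B) * |w| := by
      apply mul_le_mul_of_nonneg_right _ (abs_nonneg w)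
      exact mul_le_mul hD hP habs (by positivity)
    have final : (2 * (2:ℝ) ^ p₀ * (1 + |v| ^ p₀)) * (4 * A * B) * |w| ≤ C₁ * R := by
      have w1 : |w| ≤ 1 + |w| ^ (p₀/2) := le_one_add_rpow (abs_nonneg w) (by linarith)
      have w2 : |v| ^ p₀ * |w| ≤ |v| ^ p₀ * (1 + t ^ p₀) :=
        mul_le_mul_of_nonneg_left (htw.trans htle) hvp
      have expand : (2 * (2:ℝ) ^ p₀ * (1 + |v| ^ p₀)) * (4 * A * B) * |w|
          = C₁ * (|w| + |v| ^ p₀ * |w|) := by rw [hC₁]; ring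
      rw [expand, hRdef]
      have hsum : |w| + |v| ^ p₀ * |w|
          ≤ |v| ^ p₀ * (1 + t ^ p₀) + 1 + |w| ^ (p₀/2) + |u| ^ p₀ := by linarith
      exact mul_le_mul_of_nonneg_left hsum hC₁0.le
    calc abs (|u + v| ^ q - |u| ^ q) * |tame μ ℓμ n u * tame σ ℓμ n u| * |w|
        ≤ (2 * (2:ℝ) ^ p₀ * (1 + |v| ^ p₀)) * (4 * A * B) * |w| := step
      _ ≤ C₁ * R := final
      _ ≤ (C₁ + C₂ + C₃) * R := mul_le_mul_of_nonneg_right hCsum hR0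
  · -- 1 ≤ |u|
    rcases le_total (|u|) (2 * |v|) with huv | huv
    · -- Case 2 : 1 ≤ |u| ≤ 2|v|
      set s : ℝ := 1 + |u| + |v| with hsdef
      have hs1 : 1 ≤ s := by rw [hsdef]; linarith [abs_nonneg u, abs_nonneg v]
      have hs0 : 0 < s := by linarith
      have hsv : s ≤ 5 * |v| := by rw [hsdef]; linarith
      have hus : 1 + |u| ≤ s := by rw [hsdef]; linarith [abs_nonneg v]
      have huvs : |u + v| ≤ s := by
        have := abs_add_le u v
        rw [hsdef]; linarith
      clear_value s
      have hsq0 : (0:ℝ) ≤ s ^ q := Real.rpow_nonneg hs0.le _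
      have hD2 : abs (|u + v| ^ q - |u| ^ q) ≤ 2 * s ^ q := by
        have e1 : abs (|u + v| ^ q - |u| ^ q) ≤ |u + v| ^ q + |u| ^ q := by
          have := abs_sub (|u + v| ^ q) (|u| ^ q)
          rwa [abs_of_nonneg hXq, abs_of_nonneg hYq] at this
        have e2 : |u + v| ^ q ≤ s ^ q := Real.rpow_le_rpow (abs_nonneg _) huvs hq0
        have e3 : |u| ^ q ≤ s ^ q := Real.rpow_le_rpow (abs_nonneg _) (by linarith) hq0
        linarith
      have hP2 : |tame μ ℓμ n u * tame σ ℓμ n u| ≤ 3 * A * B * N * (s * s) := by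
        refine hprod.trans ?_
        apply mul_le_mul_of_nonneg_left _ (by linarith : (0:ℝ) ≤ 3 * A * B * N)
        apply mul_le_mul hus hus (by positivity) (by linarith)
      have hss : s ^ q * (s * s) = s ^ p₀ := by
        have e1 : s ^ (q + 1) = s ^ q * s := Real.rpow_add_one hs0.ne' q
        have e2 : s ^ (q + 1 + 1) = s ^ (q + 1) * s := Real.rpow_add_one hs0.ne' (q + 1)
        rw [← hqp2, e2, e1]; ring
      have hsp : s ^ p₀ ≤ (5:ℝ) ^ p₀ * |v| ^ p₀ := by
        have e1 : s ^ p₀ ≤ (5 * |v|) ^ p₀ :=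
          Real.rpow_le_rpow hs0.le hsv (by linarith)
        have e2 : ((5:ℝ) * |v|) ^ p₀ = (5:ℝ) ^ p₀ * |v| ^ p₀ :=
          Real.mul_rpow (by norm_num) (abs_nonneg v)
        rw [← e2]; exact e1
      calc abs (|u + v| ^ q - |u| ^ q) * |tame μ ℓμ n u * tame σ ℓμ n u| * |w|
          ≤ (2 * s ^ q) * (3 * A * B * N * (s * s)) * |w| := by
            apply mul_le_mul_of_nonneg_right _ (abs_nonneg w)
            exact mul_le_mul hD2 hP2 habs (by linarith)
        _ = 6 * A * B * (s ^ q * (s * s)) * (N * |w|) := by ring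
        _ = 6 * A * B * s ^ p₀ * t := by rw [hss, ← htdef]
        _ ≤ 6 * A * B * ((5:ℝ) ^ p₀ * |v| ^ p₀) * t := by
            apply mul_le_mul_of_nonneg_right _ ht0
            apply mul_le_mul_of_nonneg_left hsp (by linarith : (0:ℝ) ≤ 6 * A * B)
        _ = C₂ * (|v| ^ p₀ * t) := by rw [hC₂]; ring
        _ ≤ C₂ * (|v| ^ p₀ * (1 + t ^ p₀)) := by
            apply mul_le_mul_of_nonneg_left _ hC₂0.le
            exact mul_le_mul_of_nonneg_left htle hvp
        _ ≤ C₂ * R := mul_le_mul_of_nonneg_left hvR hC₂0.le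
        _ ≤ (C₁ + C₂ + C₃) * R := mul_le_mul_of_nonneg_right hCsum2 hR0
    · -- Case 3 : 1 ≤ |u|, 2|v| ≤ |u|
      have hu0 : (0:ℝ) < |u| := by linarith
      have hX : |u| / 2 ≤ |u + v| := by
        have h := abs_add_le (u + v) (-v)
        rw [add_neg_cancel_right, abs_neg] at h
        linarith
      have hXpos : (0:ℝ) < |u + v| := by linarith
      have hX2 : |u + v| ≤ 2 * |u| := by
        have := abs_add_le u v
        linarith
      have hdiff : abs (|u + v| - |u|) ≤ |v| := by
        have h := abs_abs_sub_abs_le_abs_sub (u + v) u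
        rwa [add_sub_cancel_left] at h
      have zb : ∀ z : ℝ, |u| / 2 ≤ z → z ≤ 2 * |u| → z ^ (q - 1) ≤ 2 * (2:ℝ)^q * |u| ^ (q - 1) := by
        intro z hz1 hz2
        have hz0 : 0 < z := by linarith
        have huq1 : (0:ℝ) ≤ |u| ^ (q - 1) := Real.rpow_nonneg hu0.le _
        rcases le_total 1 q with hq1 | hq1
        · have e1 : z ^ (q - 1) ≤ (2 * |u|) ^ (q - 1) :=
            Real.rpow_le_rpow hz0.le hz2 (by linarith)
          have e2 : ((2:ℝ) * |u|) ^ (q - 1) = (2:ℝ) ^ (q - 1) * |u| ^ (q - 1) :=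
            Real.mul_rpow (by norm_num) hu0.le
          have e3 : (2:ℝ) ^ (q - 1) ≤ (2:ℝ) ^ q :=
            Real.rpow_le_rpow_of_exponent_le (by norm_num) (by linarith)
          have e4 : (2:ℝ) ^ (q-1) * |u| ^ (q - 1) ≤ (2:ℝ) ^ q * |u| ^ (q - 1) :=
            mul_le_mul_of_nonneg_right e3 huq1
          have : (0:ℝ) ≤ (2:ℝ)^q * |u| ^ (q-1) := mul_nonneg h2q.le huq1
          calc z ^ (q-1) ≤ (2:ℝ) ^ (q - 1) * |u| ^ (q - 1) := e1.trans_eq e2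
            _ ≤ (2:ℝ) ^ q * |u| ^ (q - 1) := e4
            _ ≤ 2 * (2:ℝ)^q * |u| ^ (q - 1) := by linarith
        · have e1 : z ^ (q - 1) ≤ (|u| / 2) ^ (q - 1) :=
            Real.rpow_le_rpow_of_nonpos (by linarith) hz1 (by linarith)
          have e2 : (|u| / 2) ^ (q - 1) = |u| ^ (q - 1) / (2:ℝ) ^ (q - 1) :=
            Real.div_rpow hu0.le (by norm_num) _
          have e3 : (1:ℝ)/2 ≤ (2:ℝ) ^ (q - 1) := by
            have hsub : (2:ℝ) ^ (q - 1) = (2:ℝ) ^ q / 2 :=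
              Real.rpow_sub_one (by norm_num) q
            have h2q1 : (1:ℝ) ≤ (2:ℝ) ^ q := Real.one_le_rpow (by norm_num) hq0
            rw [hsub]; linarith
          have e4 : |u| ^ (q - 1) / (2:ℝ) ^ (q - 1) ≤ |u| ^ (q - 1) / (1/2) := by
            apply div_le_div_of_nonneg_left huq1 (by norm_num) e3
          have e5 : |u| ^ (q - 1) / ((1:ℝ)/2) = 2 * |u| ^ (q - 1) := by ring
          have h2q1 : (1:ℝ) ≤ (2:ℝ) ^ q := Real.one_le_rpow (by norm_num) hq0
          calc z ^ (q - 1) ≤ |u| ^ (q - 1) / (2:ℝ) ^ (q - 1) := e1.trans_eq e2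
            _ ≤ 2 * |u| ^ (q - 1) := e4.trans_eq e5
            _ ≤ 2 * (2:ℝ)^q * |u| ^ (q - 1) := by
                have := mul_le_mul_of_nonneg_right h2q1 huq1
                linarith
      have hD3 : abs (|u + v| ^ q - |u| ^ q) ≤ q * |v| * (4 * (2:ℝ)^q * |u| ^ (q - 1)) := by
        have h0 := abs_rpow_sub_rpow_le hXpos hu0 hq0
        have hz1 := zb (|u + v|) hX hX2
        have hz2 := zb (|u|) (by linarith) (by linarith)
        have hsum : |u + v| ^ (q-1) + |u| ^ (q-1) ≤ 4 * (2:ℝ)^q * |u| ^ (q - 1) := by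
          linarith
        have hmid : q * abs (|u + v| - |u|) ≤ q * |v| := mul_le_mul_of_nonneg_left hdiff hq0
        have hpos1 : (0:ℝ) ≤ |u + v| ^ (q-1) + |u| ^ (q-1) := by
          have := Real.rpow_nonneg hXpos.le (q-1)
          have := Real.rpow_nonneg hu0.le (q-1)
          linarith [Real.rpow_nonneg hXpos.le (q-1), Real.rpow_nonneg hu0.le (q-1)]
        calc abs (|u + v| ^ q - |u| ^ q)
            ≤ q * abs (|u + v| - |u|) * (|u + v| ^ (q-1) + |u| ^ (q-1)) := h0
          _ ≤ (q * |v|) * (4 * (2:ℝ)^q * |u| ^ (q - 1)) := by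
              apply mul_le_mul hmid hsum hpos1
              exact mul_nonneg hq0 (abs_nonneg v)
      have hP3 : |tame μ ℓμ n u * tame σ ℓμ n u| ≤ 3 * A * B * N * (4 * (|u| * |u|)) := by
        refine hprod.trans ?_
        apply mul_le_mul_of_nonneg_left _ (by linarith : (0:ℝ) ≤ 3 * A * B * N)
        have h2u : 1 + |u| ≤ 2 * |u| := by linarith
        calc (1 + |u|) * (1 + |u|) ≤ (2 * |u|) * (2 * |u|) :=
              mul_le_mul h2u h2u (by positivity) (by positivity)
          _ = 4 * (|u| * |u|) := by ring
      -- |u|^(q-1) * (|u| * |u|) = |u|^(q+1)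
      have hpow : |u| ^ (q - 1) * (|u| * |u|) = |u| ^ (q + 1) := by
        have e2 : |u| ^ (q + 1) = |u| ^ q * |u| := Real.rpow_add_one hu0.ne' q
        have e1 : |u| ^ (q - 1 + 1) = |u| ^ (q - 1) * |u| := Real.rpow_add_one hu0.ne' (q - 1)
        rw [sub_add_cancel] at e1
        rw [e2, e1]; ring
      have hyoung : |u| ^ (q + 1) * (|v| * t) ≤ |u| ^ p₀ + |v| ^ p₀ * t ^ p₀ := by
        have h := young_r (abs_nonneg u) (mul_nonneg (abs_nonneg v) ht0) (by linarith : (0:ℝ) ≤ q + 1)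
        rw [hqp2] at h
        have e : (|v| * t) ^ p₀ = |v| ^ p₀ * t ^ p₀ := Real.mul_rpow (abs_nonneg v) ht0
        rw [e] at h
        exact h
      have hq2q : (0:ℝ) ≤ q * (2:ℝ)^q := mul_nonneg hq0 h2q.le
      have hABq : (0:ℝ) ≤ A * B := mul_nonneg hA0 hB0
      calc abs (|u + v| ^ q - |u| ^ q) * |tame μ ℓμ n u * tame σ ℓμ n u| * |w|
          ≤ (q * |v| * (4 * (2:ℝ)^q * |u| ^ (q - 1))) * (3 * A * B * N * (4 * (|u| * |u|))) * |w| := by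
            apply mul_le_mul_of_nonneg_right _ (abs_nonneg w)
            apply mul_le_mul hD3 hP3 habs
            have hx : (0:ℝ) ≤ |u| ^ (q-1) := Real.rpow_nonneg hu0.le _
            exact mul_nonneg (mul_nonneg hq0 (abs_nonneg v))
              (mul_nonneg (by positivity) hx)
        _ = (48 * q * (2:ℝ)^q * A * B) * ((|u| ^ (q - 1) * (|u| * |u|)) * (|v| * (N * |w|))) := by
            ring
        _ = (48 * q * (2:ℝ)^q * A * B) * (|u| ^ (q + 1) * (|v| * t)) := by
            rw [hpow, ← htdef]
        _ ≤ (48 * q * (2:ℝ)^q * A * B) * (|u| ^ p₀ + |v| ^ p₀ * t ^ p₀) := by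
            apply mul_le_mul_of_nonneg_left hyoung
            exact mul_nonneg (mul_nonneg (mul_nonneg
              (mul_nonneg (by norm_num) hq0) h2q.le) hA0) hB0
        _ ≤ C₃ * R := by
            rw [hC₃]
            have hsum : |u| ^ p₀ + |v| ^ p₀ * t ^ p₀ ≤ R := by
              rw [hRdef]
              have hexp : |v| ^ p₀ * (1 + t ^ p₀) = |v| ^ p₀ + |v| ^ p₀ * t ^ p₀ := by ring
              linarith
            have hfac : (0:ℝ) ≤ (2:ℝ)^q * (A * B) := mul_nonneg h2q.le hAB
            have hcoef : 48 * q * (2:ℝ)^q * A * B ≤ 48 * (q + 1) * (2:ℝ)^q * A * B := by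
              have h := mul_le_mul_of_nonneg_right
                (by linarith : 48 * q ≤ 48 * (q + 1)) hfac
              calc 48 * q * (2:ℝ)^q * A * B = (48 * q) * ((2:ℝ)^q * (A * B)) := by ring
                _ ≤ (48 * (q + 1)) * ((2:ℝ)^q * (A * B)) := h
                _ = 48 * (q + 1) * (2:ℝ)^q * A * B := by ring
            have h1 : (0:ℝ) ≤ |u| ^ p₀ + |v| ^ p₀ * t ^ p₀ :=
              add_nonneg hup (mul_nonneg hvp htp)
            have h2 : (0:ℝ) ≤ 48 * (q + 1) * (2:ℝ)^q * A * B :=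
              mul_nonneg (mul_nonneg (mul_nonneg
                (by linarith : (0:ℝ) ≤ 48 * (q + 1)) h2q.le) hA0) hB0
            calc (48 * q * (2:ℝ)^q * A * B) * (|u| ^ p₀ + |v| ^ p₀ * t ^ p₀)
                ≤ (48 * (q + 1) * (2:ℝ)^q * A * B) * (|u| ^ p₀ + |v| ^ p₀ * t ^ p₀) :=
                  mul_le_mul_of_nonneg_right hcoef h1
              _ ≤ (48 * (q + 1) * (2:ℝ)^q * A * B) * R := mul_le_mul_of_nonneg_left hsum h2
        _ ≤ (C₁ + C₂ + C₃) * R := mul_le_mul_of_nonneg_right hCsum3 hR0
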